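/- arXiv:quant-ph/0404126 — 4 statements merged into one kernel-verified Lean document; each statement's English description precedes it below -/
import Mathlib

section
/- For 0 < p < 1 and a fixed n×n complex matrix K, the function F(A,B) = Tr(A^p K† B^(1-p) K) is jointly concave on pairs of positive semidefinite n×n matrices, i.e., for A₁,A₂,B₁,B₂ positive semidefinite and λ ∈ [0,1], Tr((λA₁+(1-λ)A₂)^p K† (λB₁+(1-λ)B₂)^(1-p) K) ≥ λ Tr(A₁^p K† B₁^(1-p) K) + (1-λ) Tr(A₂^p K† B₂^(1-p) K). -/
open Matrix
open scoped ComplexOrder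

/-- Spectral power of a matrix: `A ^ p` defined via the spectral decomposition
(with the convention `0 ^ p = 0` for `p > 0`), extended by junk value `0`
off the Hermitian matrices. -/
noncomputable def mpow {n : ℕ} (A : Matrix (Fin n) (Fin n) ℂ) (p : ℝ) :
    Matrix (Fin n) (Fin n) ℂ :=
  if h : A.IsHermitian then h.cfc (fun x => x ^ p) else 0

open Matrix Set MeasureTheory
open scoped ComplexOrder

variable {n : ℕ}

noncomputable def hker (t a b : ℝ) : ℝ := a * t * b / (a + t * b)

lemma hker_nonneg {t a b : ℝ} (ha : 0 ≤ a) (hb : 0 ≤ b) (ht : 0 ≤ t) : 0 ≤ hker t a b := by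
  unfold hker; positivity

lemma hker_ineq {t a b : ℝ} (ha : 0 ≤ a) (hb : 0 ≤ b) (ht : 0 < t) (x y : ℂ) :
    hker t a b * Complex.normSq (x + y) ≤ a * Complex.normSq x + t * b * Complex.normSq y := by
  rcases eq_or_lt_of_le (by positivity : (0:ℝ) ≤ a + t * b) with h | h
  · have ha0 : a = 0 := by nlinarith
    have hb0 : b = 0 := by nlinarith
    simp [hker, ha0, hb0]
  · have h1 : Complex.normSq (x + y) ≤ (‖x‖ + ‖y‖)^2 := by
      rw [← Complex.sq_norm]
      have := norm_add_le x y
      nlinarith [norm_nonneg (x + y), norm_nonneg x, norm_nonneg y]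
    have h2 : hker t a b * Complex.normSq (x + y) ≤ hker t a b * (‖x‖ + ‖y‖)^2 :=
      mul_le_mul_of_nonneg_left h1 (hker_nonneg ha hb ht.le)
    refine h2.trans ?_
    rw [← Complex.sq_norm, ← Complex.sq_norm]
    set u := ‖x‖
    set v := ‖y‖
    have hu : 0 ≤ u := norm_nonneg x
    have hv : 0 ≤ v := norm_nonneg y
    rw [hker, div_mul_eq_mul_div, div_le_iff₀ h]
    nlinarith [sq_nonneg (a * u - t * b * v)]

lemma hker_eq {t a b : ℝ} (ha : 0 ≤ a) (hb : 0 ≤ b) (ht : 0 < t) :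
    a * (t * b / (a + t * b))^2 + t * b * (1 - t * b / (a + t * b))^2 = hker t a b := by
  rcases eq_or_lt_of_le (by positivity : (0:ℝ) ≤ a + t * b) with h | h
  · have ha0 : a = 0 := by nlinarith
    have hb0 : b = 0 := by nlinarith
    simp [hker, ha0, hb0]
  · have h1 : 1 - t * b / (a + t * b) = a / (a + t * b) := by
      field_simp
      ring
    rw [h1, hker]
    field_simp
    ring


/-- Integrability helper: a continuous nonneg function on `Ioi 0` dominated by
`c₁ t^(p-1)` on `(0,1]` and by `c₂ t^(p-2)` on `(1,∞)` is integrable. -/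
lemma integrable_helper {p : ℝ} (hp0 : 0 < p) (hp1 : p < 1) (f : ℝ → ℝ)
    (hc : ContinuousOn f (Ioi 0)) {c₁ c₂ : ℝ}
    (h1 : ∀ t ∈ Ioc (0:ℝ) 1, |f t| ≤ c₁ * t ^ (p - 1))
    (h2 : ∀ t ∈ Ioi (1:ℝ), |f t| ≤ c₂ * t ^ (p - 2)) :
    IntegrableOn f (Ioi (0:ℝ)) := by
  rw [← Ioc_union_Ioi_eq_Ioi (zero_le_one (α := ℝ)), integrableOn_union]
  constructor
  · have hmeas : AEStronglyMeasurable f (volume.restrict (Ioc (0:ℝ) 1)) :=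
      (hc.mono (Ioc_subset_Ioi_self : Ioc (0:ℝ) 1 ⊆ Ioi 0)).aestronglyMeasurable measurableSet_Ioc
    have hint : IntegrableOn (fun t : ℝ => c₁ * t ^ (p - 1)) (Ioc (0:ℝ) 1) := by
      refine Integrable.const_mul ?_ c₁
      have := intervalIntegral.intervalIntegrable_rpow' (r := p - 1) (a := 0) (b := 1) (by linarith)
      rw [intervalIntegrable_iff_integrableOn_Ioc_of_le zero_le_one] at this
      exact this
    exact Integrable.mono' hint hmeas <| (ae_restrict_iff' measurableSet_Ioc).2 <|
      Filter.Eventually.of_forall h1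
  · have hmeas : AEStronglyMeasurable f (volume.restrict (Ioi (1:ℝ))) :=
      (hc.mono (Ioi_subset_Ioi zero_le_one : Ioi (1:ℝ) ⊆ Ioi 0)).aestronglyMeasurable measurableSet_Ioi
    have hint : IntegrableOn (fun t : ℝ => c₂ * t ^ (p - 2)) (Ioi (1:ℝ)) :=
      (integrableOn_Ioi_rpow_of_lt (by linarith) zero_lt_one).const_mul c₂
    exact Integrable.mono' hint hmeas <| (ae_restrict_iff' measurableSet_Ioi).2 <|
      Filter.Eventually.of_forall h2

lemma continuousOn_rpow_Ioi (q : ℝ) : ContinuousOn (fun t : ℝ => t ^ q) (Ioi 0) := fun t ht =>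
  (Real.continuousAt_rpow_const t q (Or.inl (ne_of_gt ht))).continuousWithinAt

/-- The base integral constant. -/
noncomputable def liebC (p : ℝ) : ℝ := ∫ t in Ioi (0:ℝ), t ^ (p - 1) / (1 + t)

lemma liebC_integrable {p : ℝ} (hp0 : 0 < p) (hp1 : p < 1) :
    IntegrableOn (fun t : ℝ => t ^ (p - 1) / (1 + t)) (Ioi (0:ℝ)) := by
  refine integrable_helper hp0 hp1 _ ?_ (c₁ := 1) ?_ (c₂ := 1) ?_
  · exact (continuousOn_rpow_Ioi (p-1)).div
      (continuous_const.add continuous_id).continuousOn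
      (fun t ht => by have : (0:ℝ) < t := ht; positivity)
  · intro t ht
    have ht0 : (0:ℝ) < t := ht.1
    have h1 : (0:ℝ) < 1 + t := by linarith
    rw [abs_of_nonneg (by positivity), one_mul]
    rw [div_le_iff₀ h1]
    nlinarith [Real.rpow_nonneg (le_of_lt ht.1) (p-1), ht.1]
  · intro t ht
    have ht1 : (1:ℝ) < t := ht
    have h1 : (0:ℝ) < 1 + t := by linarith
    rw [abs_of_nonneg (by positivity), one_mul, div_le_iff₀ h1]
    have : t ^ (p-2) * t = t ^ (p-1) := by
      rw [← Real.rpow_add_one (by positivity : t ≠ 0) (p-2)]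
      ring_nf
    nlinarith [Real.rpow_nonneg (by linarith : (0:ℝ) ≤ t) (p-2)]

lemma liebC_pos {p : ℝ} (hp0 : 0 < p) (hp1 : p < 1) : 0 < liebC p := by
  rw [liebC]
  rw [setIntegral_pos_iff_support_of_nonneg_ae]
  · have hsub : Ioi (0:ℝ) ⊆ (Function.support fun t => t ^ (p - 1) / (1 + t)) ∩ Ioi 0 := by
      intro t ht
      have ht0 : (0:ℝ) < t := ht
      refine ⟨?_, ht⟩
      simp only [Function.mem_support]
      positivity
    calc (0:ENNReal) < volume (Ioi (0:ℝ)) := by simp [Real.volume_Ioi]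
      _ ≤ _ := measure_mono hsub
  · refine (ae_restrict_iff' measurableSet_Ioi).2 (Filter.Eventually.of_forall fun t ht => ?_)
    have : (0:ℝ) < t := ht
    positivity
  · exact liebC_integrable hp0 hp1

lemma hker_zero_left {t b : ℝ} : hker t 0 b = 0 := by simp [hker]
lemma hker_zero_right {t a : ℝ} : hker t a 0 = 0 := by simp [hker]

lemma slice_integrable {p : ℝ} (hp0 : 0 < p) (hp1 : p < 1) {a b : ℝ}
    (ha : 0 ≤ a) (hb : 0 ≤ b) :
    IntegrableOn (fun t : ℝ => t ^ (p - 2) * hker t a b) (Ioi (0:ℝ)) := by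
  rcases ha.eq_or_lt with rfl | ha
  · simpa [hker_zero_left] using (integrableOn_zero :
      IntegrableOn (fun _ : ℝ => (0:ℝ)) (Ioi (0:ℝ)) volume)
  rcases hb.eq_or_lt with rfl | hb
  · simpa [hker_zero_right] using (integrableOn_zero :
      IntegrableOn (fun _ : ℝ => (0:ℝ)) (Ioi (0:ℝ)) volume)
  refine integrable_helper hp0 hp1 _ ?_ (c₁ := b) ?_ (c₂ := a) ?_
  · refine (continuousOn_rpow_Ioi (p-2)).mul ?_
    unfold hker
    refine ContinuousOn.div ?_ ?_ ?_
    · fun_prop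
    · fun_prop
    · intro t ht
      have : (0:ℝ) < t := ht
      positivity
  · intro t ht
    have ht0 : (0:ℝ) < t := ht.1
    have hd : (0:ℝ) < a + t * b := by positivity
    have h1 : hker t a b ≤ t * b := by
      rw [hker, div_le_iff₀ hd]; nlinarith [sq_nonneg (t*b), mul_pos ht0 hb]
    have h2 : (0:ℝ) ≤ hker t a b := by unfold hker; positivity
    have h3 : (0:ℝ) ≤ t ^ (p-2) := Real.rpow_nonneg ht0.le _
    rw [abs_of_nonneg (by positivity)]
    calc t ^ (p-2) * hker t a b ≤ t ^ (p-2) * (t * b) := by nlinarith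
      _ = b * (t ^ (p-2) * t) := by ring
      _ = b * t ^ (p-1) := by
          rw [← Real.rpow_add_one ht0.ne' (p-2)]; ring_nf
  · intro t ht
    have ht0 : (0:ℝ) < t := lt_trans zero_lt_one ht
    have hd : (0:ℝ) < a + t * b := by positivity
    have h1 : hker t a b ≤ a := by
      rw [hker, div_le_iff₀ hd]; nlinarith [sq_nonneg a, mul_pos ht0 hb]
    have h2 : (0:ℝ) ≤ hker t a b := by unfold hker; positivity
    have h3 : (0:ℝ) ≤ t ^ (p-2) := Real.rpow_nonneg ht0.le _
    rw [abs_of_nonneg (by positivity)]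
    nlinarith

lemma slice_integral {p : ℝ} (hp0 : 0 < p) (hp1 : p < 1) {a b : ℝ}
    (ha : 0 ≤ a) (hb : 0 ≤ b) :
    ∫ t in Ioi (0:ℝ), t ^ (p - 2) * hker t a b = (a ^ p * b ^ (1 - p)) * liebC p := by
  rcases ha.eq_or_lt with rfl | ha
  · simp [hker_zero_left, Real.zero_rpow hp0.ne']
  rcases hb.eq_or_lt with rfl | hb
  · simp [hker_zero_right, Real.zero_rpow (by linarith : 1 - p ≠ 0)]
  have hab : (0:ℝ) < a / b := by positivity
  have key := integral_comp_mul_left_Ioi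
    (fun t : ℝ => t ^ (p - 2) * hker t a b) 0 hab
  rw [mul_zero] at key
  have inner : ∫ s in Ioi (0:ℝ), (a/b * s) ^ (p - 2) * hker (a/b * s) a b
      = ((a/b) ^ (p-2) * a) * liebC p := by
    rw [liebC, ← integral_const_mul]
    refine setIntegral_congr_fun measurableSet_Ioi (fun s hs => ?_)
    have hs0 : (0:ℝ) < s := hs
    have h1 : hker (a/b * s) a b = a * s / (1 + s) := by
      rw [hker]
      rw [show a * (a/b * s) * b = a * (a * s) by field_simp,
          show a + a/b * s * b = a * (1 + s) by field_simp]
      rw [mul_div_mul_left _ _ (ne_of_gt ha)]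
    have h2 : (a/b * s) ^ (p-2) = (a/b) ^ (p-2) * s ^ (p-2) :=
      Real.mul_rpow hab.le hs0.le
    rw [h1, h2]
    have h3 : s ^ (p-2) * s = s ^ (p-1) := by
      rw [← Real.rpow_add_one hs0.ne' (p-2)]; ring_nf
    field_simp
    exact h3
  rw [show (∫ t in Ioi (0:ℝ), t ^ (p - 2) * hker t a b)
        = (a/b)⁻¹⁻¹ • ∫ x in Ioi (0:ℝ), (fun t : ℝ => t ^ (p - 2) * hker t a b) (a/b * x) by
      rw [key, smul_smul, inv_mul_cancel₀ (by positivity), one_smul]]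
  simp only []
  rw [inner, inv_inv, smul_eq_mul]
  have h4 : a / b * ((a/b) ^ (p-2) * a) = a ^ p * b ^ (1-p) := by
    have e0 : a / b * ((a/b) ^ (p-2) * a) = (a/b) ^ (p-1) * a := by
      rw [show p - 1 = 1 + (p-2) by ring, Real.rpow_add hab, Real.rpow_one]; ring
    have e1 : ((a/b):ℝ) ^ (p-1) = a ^ (p-1) / b ^ (p-1) := Real.div_rpow ha.le hb.le _
    have e2 : a ^ (p-1) * a = a ^ p := by
      rw [← Real.rpow_add_one ha.ne' (p-1)]; ring_nf
    have e3 : b ^ (1-p) = (b ^ (p-1))⁻¹ := by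
      rw [show (1:ℝ) - p = -(p-1) by ring, Real.rpow_neg hb.le]
    have hbp : b ^ (p-1) ≠ 0 := ne_of_gt (Real.rpow_pos_of_pos hb _)
    rw [e0, e1, e3]
    field_simp
    linear_combination e2
  rw [← mul_assoc, h4]
variable {n : ℕ}

lemma trace_diag_sandwich (d e : Fin n → ℝ) (N : Matrix (Fin n) (Fin n) ℂ) :
    (Matrix.diagonal (fun i => (d i : ℂ)) * N * Matrix.diagonal (fun j => (e j : ℂ)) * Nᴴ).trace
      = ((∑ i, ∑ j, d i * e j * Complex.normSq (N i j) : ℝ) : ℂ) := by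
  have h1 : ∀ i j, (Matrix.diagonal (fun i => (d i : ℂ)) * N
      * Matrix.diagonal (fun j => (e j : ℂ))) i j = (d i : ℂ) * N i j * (e j : ℂ) := by
    intro i j; rw [Matrix.mul_diagonal, Matrix.diagonal_mul]
  have h2 : ∀ i, (Matrix.diagonal (fun i => (d i : ℂ)) * N * Matrix.diagonal (fun j => (e j : ℂ))
      * Nᴴ) i i = ∑ j, (d i : ℂ) * N i j * (e j : ℂ) * star (N i j) := by
    intro i
    rw [Matrix.mul_apply]
    exact Finset.sum_congr rfl fun j _ => by rw [h1, Matrix.conjTranspose_apply]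
  rw [Matrix.trace]
  simp only [Matrix.diag_apply]
  rw [Finset.sum_congr rfl fun i _ => h2 i]
  push_cast
  refine Finset.sum_congr rfl fun i _ => Finset.sum_congr rfl fun j _ => ?_
  rw [Complex.star_def]
  linear_combination ((d i : ℂ) * (e j : ℂ)) * Complex.mul_conj (N i j)

lemma trace_unitary_conj (U M : Matrix (Fin n) (Fin n) ℂ) (hU : star U * U = 1) :
    (U * M * star U).trace = M.trace := by
  rw [Matrix.trace_mul_comm (U * M) (star U), ← mul_assoc, hU, one_mul]

lemma conj_reconstruct (U X V : Matrix (Fin n) (Fin n) ℂ)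
    (hU1 : U * star U = 1) (hV1 : V * star V = 1) :
    U * (star U * X * V) * star V = X := by
  calc U * (star U * X * V) * star V = U * star U * X * (V * star V) := by
        simp only [mul_assoc]
      _ = X := by rw [hU1, hV1, one_mul, mul_one]

/-- Expansion of `Tr(f(A) Kᴴ g(B) K)` in terms of eigen-data. -/
lemma cfc_trace_form (K A B : Matrix (Fin n) (Fin n) ℂ)
    (hA : A.IsHermitian) (hB : B.IsHermitian) (f g : ℝ → ℝ) :
    (hA.cfc f * Kᴴ * hB.cfc g * K).trace
      = ((∑ i, ∑ j, f (hA.eigenvalues i) * g (hB.eigenvalues j)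
          * Complex.normSq ((star (hA.eigenvectorUnitary : Matrix (Fin n) (Fin n) ℂ) * Kᴴ
            * (hB.eigenvectorUnitary : Matrix (Fin n) (Fin n) ℂ)) i j) : ℝ) : ℂ) := by
  set U := (hA.eigenvectorUnitary : Matrix (Fin n) (Fin n) ℂ) with hUdef
  set V := (hB.eigenvectorUnitary : Matrix (Fin n) (Fin n) ℂ) with hVdef
  have hU1 : U * star U = 1 := Matrix.mem_unitaryGroup_iff.mp (hA.eigenvectorUnitary).2
  have hU2 : star U * U = 1 := Matrix.mem_unitaryGroup_iff'.mp (hA.eigenvectorUnitary).2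
  set N := star U * Kᴴ * V with hN
  have hNH : Nᴴ = star V * K * U := by
    rw [hN]
    simp only [Matrix.conjTranspose_mul, Matrix.conjTranspose_conjTranspose,
      Matrix.star_eq_conjTranspose]
    simp only [mul_assoc]
  have hdiagA : Matrix.diagonal (RCLike.ofReal ∘ f ∘ hA.eigenvalues)
      = Matrix.diagonal (fun i => ((f (hA.eigenvalues i) : ℝ) : ℂ)) := rfl
  have hdiagB : Matrix.diagonal (RCLike.ofReal ∘ g ∘ hB.eigenvalues)
      = Matrix.diagonal (fun j => ((g (hB.eigenvalues j) : ℝ) : ℂ)) := rfl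
  have key : hA.cfc f * Kᴴ * hB.cfc g * K
      = U * (Matrix.diagonal (fun i => ((f (hA.eigenvalues i) : ℝ) : ℂ)) * N
          * Matrix.diagonal (fun j => ((g (hB.eigenvalues j) : ℝ) : ℂ)) * Nᴴ) * star U := by
    rw [Matrix.IsHermitian.cfc, Matrix.IsHermitian.cfc, hdiagA, hdiagB, hNH, hN]
    simp only [Unitary.conjStarAlgAut_apply]
    simp only [mul_assoc, ← hUdef, ← hVdef]
    rw [hU1]
    simp only [mul_one]
  rw [key, trace_unitary_conj _ _ hU2, trace_diag_sandwich]


lemma sandwich_algebra (U V D Z : Matrix (Fin n) (Fin n) ℂ) (hU2 : star U * U = 1) :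
    (V * Zᴴ * star U) * (U * D * star U) * (U * Z * star V)
      = V * (Zᴴ * D * Z) * star V := by
  have h : ∀ M N : Matrix (Fin n) (Fin n) ℂ, M * star U * (U * N) = M * N := fun M N => by
    rw [mul_assoc M, ← mul_assoc (star U), hU2, one_mul]
  calc (V * Zᴴ * star U) * (U * D * star U) * (U * Z * star V)
      = (V * Zᴴ * star U) * (U * (D * star U)) * (U * (Z * star V)) := by
        simp only [mul_assoc]
    _ = (V * Zᴴ) * (D * star U) * (U * (Z * star V)) := by rw [h]
    _ = ((V * Zᴴ) * D) * star U * (U * (Z * star V)) := by simp only [mul_assoc]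
    _ = ((V * Zᴴ) * D) * (Z * star V) := by rw [h]
    _ = V * (Zᴴ * D * Z) * star V := by simp only [mul_assoc]

lemma sandwich_algebra' (U V E Z : Matrix (Fin n) (Fin n) ℂ)
    (hU2 : star U * U = 1) (hV2 : star V * V = 1) :
    (V * Zᴴ * star U) * (U * Z * star V) * (V * E * star V)
      = V * ((Zᴴ * Z) * E) * star V := by
  have h : ∀ M N : Matrix (Fin n) (Fin n) ℂ, M * star U * (U * N) = M * N := fun M N => by
    rw [mul_assoc M, ← mul_assoc (star U), hU2, one_mul]
  have h' : ∀ M N : Matrix (Fin n) (Fin n) ℂ, M * star V * (V * N) = M * N := fun M N => by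
    rw [mul_assoc M, ← mul_assoc (star V), hV2, one_mul]
  calc (V * Zᴴ * star U) * (U * Z * star V) * (V * E * star V)
      = (V * Zᴴ * star U) * (U * (Z * star V)) * (V * (E * star V)) := by
        simp only [mul_assoc]
    _ = (V * Zᴴ) * (Z * star V) * (V * (E * star V)) := by rw [h]
    _ = ((V * Zᴴ) * Z) * star V * (V * (E * star V)) := by simp only [mul_assoc]
    _ = ((V * Zᴴ) * Z) * (E * star V) := by rw [h']
    _ = V * ((Zᴴ * Z) * E) * star V := by simp only [mul_assoc]

/-- Expansion of `Tr(Xᴴ A X)`. -/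
lemma quad_left_form (A X V : Matrix (Fin n) (Fin n) ℂ) (hA : A.IsHermitian)
    (hV1 : V * star V = 1) (hV2 : star V * V = 1) :
    (Xᴴ * A * X).trace
      = ((∑ i, ∑ j, hA.eigenvalues i
          * Complex.normSq ((star (hA.eigenvectorUnitary : Matrix (Fin n) (Fin n) ℂ) * X * V) i j) : ℝ) : ℂ) := by
  set U := (hA.eigenvectorUnitary : Matrix (Fin n) (Fin n) ℂ) with hUdef
  have hU1 : U * star U = 1 := Matrix.mem_unitaryGroup_iff.mp (hA.eigenvectorUnitary).2
  have hU2 : star U * U = 1 := Matrix.mem_unitaryGroup_iff'.mp (hA.eigenvectorUnitary).2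
  set Z := star U * X * V with hZ
  have hX : X = U * Z * star V := (conj_reconstruct U X V hU1 hV1).symm
  have hXH : Xᴴ = V * Zᴴ * star U := by
    rw [hX]
    simp only [Matrix.conjTranspose_mul, Matrix.conjTranspose_conjTranspose,
      Matrix.star_eq_conjTranspose]
    simp only [mul_assoc]
  have hD : A = U * Matrix.diagonal (fun i => ((hA.eigenvalues i : ℝ) : ℂ)) * star U := by
    conv_lhs => rw [hA.spectral_theorem]
    rfl
  have key : Xᴴ * A * X = V * (Zᴴ * Matrix.diagonal (fun i => ((hA.eigenvalues i : ℝ) : ℂ)) * Z)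
      * star V := by
    rw [show V * (Zᴴ * Matrix.diagonal (fun i => ((hA.eigenvalues i : ℝ) : ℂ)) * Z) * star V
        = (V * Zᴴ * star U) * (U * Matrix.diagonal (fun i => ((hA.eigenvalues i : ℝ) : ℂ))
          * star U) * (U * Z * star V) from (sandwich_algebra U V _ Z hU2).symm]
    rw [← hD, ← hXH, ← hX]
  rw [key, trace_unitary_conj _ _ hV2]
  have sand := trace_diag_sandwich (fun i => hA.eigenvalues i) (fun _ => (1:ℝ)) Z
  rw [show Matrix.diagonal (fun _ : Fin n => (((1:ℝ)) : ℂ)) = 1 from by simp, mul_one] at sand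
  have cyc : (Zᴴ * Matrix.diagonal (fun i => ((hA.eigenvalues i : ℝ) : ℂ)) * Z).trace
      = (Matrix.diagonal (fun i => ((hA.eigenvalues i : ℝ) : ℂ)) * Z * Zᴴ).trace := by
    rw [mul_assoc, Matrix.trace_mul_comm, mul_assoc]
  rw [cyc, sand]
  norm_cast
  simp [mul_one]

/-- Expansion of `Tr(Yᴴ Y B)`. -/
lemma quad_right_form (B Y U : Matrix (Fin n) (Fin n) ℂ) (hB : B.IsHermitian)
    (hU1 : U * star U = 1) (hU2 : star U * U = 1) :
    (Yᴴ * Y * B).trace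
      = ((∑ i, ∑ j, hB.eigenvalues j
          * Complex.normSq ((star U * Y * (hB.eigenvectorUnitary : Matrix (Fin n) (Fin n) ℂ)) i j) : ℝ) : ℂ) := by
  set V := (hB.eigenvectorUnitary : Matrix (Fin n) (Fin n) ℂ) with hVdef
  have hV1 : V * star V = 1 := Matrix.mem_unitaryGroup_iff.mp (hB.eigenvectorUnitary).2
  have hV2 : star V * V = 1 := Matrix.mem_unitaryGroup_iff'.mp (hB.eigenvectorUnitary).2
  set Z := star U * Y * V with hZ
  have hY : Y = U * Z * star V := (conj_reconstruct U Y V hU1 hV1).symm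
  have hYH : Yᴴ = V * Zᴴ * star U := by
    rw [hY]
    simp only [Matrix.conjTranspose_mul, Matrix.conjTranspose_conjTranspose,
      Matrix.star_eq_conjTranspose]
    simp only [mul_assoc]
  have hD : B = V * Matrix.diagonal (fun j => ((hB.eigenvalues j : ℝ) : ℂ)) * star V := by
    conv_lhs => rw [hB.spectral_theorem]
    rfl
  have key : Yᴴ * Y * B = V * ((Zᴴ * Z) * Matrix.diagonal (fun j => ((hB.eigenvalues j : ℝ) : ℂ)))
      * star V := by
    rw [show V * ((Zᴴ * Z) * Matrix.diagonal (fun j => ((hB.eigenvalues j : ℝ) : ℂ))) * star V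
        = (V * Zᴴ * star U) * (U * Z * star V)
          * (V * Matrix.diagonal (fun j => ((hB.eigenvalues j : ℝ) : ℂ)) * star V) from
        (sandwich_algebra' U V _ Z hU2 hV2).symm]
    rw [← hD, ← hYH, ← hY]
  rw [key, trace_unitary_conj _ _ hV2]
  have sand := trace_diag_sandwich (fun _ => (1:ℝ)) (fun j => hB.eigenvalues j) Z
  rw [show Matrix.diagonal (fun _ : Fin n => (((1:ℝ)) : ℂ)) = 1 from by simp, one_mul] at sand
  have cyc : ((Zᴴ * Z) * Matrix.diagonal (fun j => ((hB.eigenvalues j : ℝ) : ℂ))).trace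
      = (Z * Matrix.diagonal (fun j => ((hB.eigenvalues j : ℝ) : ℂ)) * Zᴴ).trace := by
    rw [mul_assoc, Matrix.trace_mul_comm, mul_assoc]
  rw [cyc, sand]
  norm_cast
  simp [one_mul]



lemma posSemidef_real_smul {A : Matrix (Fin n) (Fin n) ℂ} (hA : A.PosSemidef) {c : ℝ}
    (hc : 0 ≤ c) : (c • A).PosSemidef := by
  refine ⟨?_, fun x => ?_⟩
  · show (c • A)ᴴ = c • A
    rw [Matrix.conjTranspose_smul, star_trivial, hA.1.eq]
  · exact (hA.smul hc).2 x

/-- The `t`-slice functional. -/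
noncomputable def sliceFun (p : ℝ) (t : ℝ) (K A B : Matrix (Fin n) (Fin n) ℂ)
    (hA : A.PosSemidef) (hB : B.PosSemidef) : ℝ :=
  ∑ i, ∑ j, (t ^ (p-2) * hker t (hA.1.eigenvalues i) (hB.1.eigenvalues j))
    * Complex.normSq ((star (hA.1.eigenvectorUnitary : Matrix (Fin n) (Fin n) ℂ) * Kᴴ
        * (hB.1.eigenvectorUnitary : Matrix (Fin n) (Fin n) ℂ)) i j)

lemma sliceFun_integrable {p : ℝ} (hp0 : 0 < p) (hp1 : p < 1)
    (K A B : Matrix (Fin n) (Fin n) ℂ) (hA : A.PosSemidef) (hB : B.PosSemidef) :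
    IntegrableOn (fun t => sliceFun p t K A B hA hB) (Ioi (0:ℝ)) := by
  unfold sliceFun
  refine integrable_finset_sum _ (fun i _ => integrable_finset_sum _ (fun j _ => ?_))
  exact (slice_integrable hp0 hp1 (hA.eigenvalues_nonneg i) (hB.eigenvalues_nonneg j)).mul_const _

lemma sliceFun_integral {p : ℝ} (hp0 : 0 < p) (hp1 : p < 1)
    (K A B : Matrix (Fin n) (Fin n) ℂ) (hA : A.PosSemidef) (hB : B.PosSemidef) :
    ∫ t in Ioi (0:ℝ), sliceFun p t K A B hA hB
      = ((mpow A p * Kᴴ * mpow B (1-p) * K).trace).re * liebC p := by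
  have hform : (mpow A p * Kᴴ * mpow B (1-p) * K).trace
      = ((∑ i, ∑ j, (hA.1.eigenvalues i ^ p) * (hB.1.eigenvalues j ^ (1-p))
          * Complex.normSq ((star (hA.1.eigenvectorUnitary : Matrix (Fin n) (Fin n) ℂ) * Kᴴ
            * (hB.1.eigenvectorUnitary : Matrix (Fin n) (Fin n) ℂ)) i j) : ℝ) : ℂ) := by
    rw [mpow, mpow, dif_pos hA.1, dif_pos hB.1]
    exact cfc_trace_form K A B hA.1 hB.1 _ _
  rw [hform, Complex.ofReal_re, Finset.sum_mul]
  unfold sliceFun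
  rw [integral_finset_sum _ (fun i _ => integrable_finset_sum _ (fun j _ =>
    (slice_integrable hp0 hp1 (hA.eigenvalues_nonneg i) (hB.eigenvalues_nonneg j)).mul_const _))]
  refine Finset.sum_congr rfl fun i _ => ?_
  rw [Finset.sum_mul]
  rw [integral_finset_sum _ (fun j _ =>
    (slice_integrable hp0 hp1 (hA.eigenvalues_nonneg i) (hB.eigenvalues_nonneg j)).mul_const _)]
  refine Finset.sum_congr rfl fun j _ => ?_
  rw [integral_mul_const, slice_integral hp0 hp1 (hA.eigenvalues_nonneg i)
    (hB.eigenvalues_nonneg j)]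
  ring

/-- Lower bound: any decomposition `X + Y = Kᴴ` dominates the slice functional. -/
lemma slice_lower (K A B X Y : Matrix (Fin n) (Fin n) ℂ) (hA : A.PosSemidef) (hB : B.PosSemidef)
    {t : ℝ} (ht : 0 < t) (hXY : X + Y = Kᴴ) :
    ∑ i, ∑ j, hker t (hA.1.eigenvalues i) (hB.1.eigenvalues j)
        * Complex.normSq ((star (hA.1.eigenvectorUnitary : Matrix (Fin n) (Fin n) ℂ) * Kᴴ
            * (hB.1.eigenvectorUnitary : Matrix (Fin n) (Fin n) ℂ)) i j)
      ≤ ((Xᴴ * A * X).trace).re + t * ((Yᴴ * Y * B).trace).re := by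
  set U := (hA.1.eigenvectorUnitary : Matrix (Fin n) (Fin n) ℂ) with hUdef
  set V := (hB.1.eigenvectorUnitary : Matrix (Fin n) (Fin n) ℂ) with hVdef
  have hU1 : U * star U = 1 := Matrix.mem_unitaryGroup_iff.mp (hA.1.eigenvectorUnitary).2
  have hU2 : star U * U = 1 := Matrix.mem_unitaryGroup_iff'.mp (hA.1.eigenvectorUnitary).2
  have hV1 : V * star V = 1 := Matrix.mem_unitaryGroup_iff.mp (hB.1.eigenvectorUnitary).2
  have hV2 : star V * V = 1 := Matrix.mem_unitaryGroup_iff'.mp (hB.1.eigenvectorUnitary).2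
  rw [quad_left_form A X V hA.1 hV1 hV2, quad_right_form B Y U hB.1 hU1 hU2,
    Complex.ofReal_re, Complex.ofReal_re, ← hUdef, ← hVdef]
  have hsplit : star U * Kᴴ * V = star U * X * V + star U * Y * V := by
    rw [← hXY]; rw [Matrix.mul_add, Matrix.add_mul]
  rw [hsplit, Finset.mul_sum, ← Finset.sum_add_distrib]
  refine Finset.sum_le_sum fun i _ => ?_
  rw [Finset.mul_sum, ← Finset.sum_add_distrib]
  refine Finset.sum_le_sum fun j _ => ?_
  rw [Matrix.add_apply]
  have h := hker_ineq (hA.eigenvalues_nonneg i) (hB.eigenvalues_nonneg j) ht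
    ((star U * X * V) i j) ((star U * Y * V) i j)
  nlinarith [h]

/-- Attainment of the slice functional by an explicit decomposition. -/
lemma slice_attain (K A B : Matrix (Fin n) (Fin n) ℂ) (hA : A.PosSemidef) (hB : B.PosSemidef)
    {t : ℝ} (ht : 0 < t) :
    ∃ X Y : Matrix (Fin n) (Fin n) ℂ, X + Y = Kᴴ ∧
    ∑ i, ∑ j, hker t (hA.1.eigenvalues i) (hB.1.eigenvalues j)
        * Complex.normSq ((star (hA.1.eigenvectorUnitary : Matrix (Fin n) (Fin n) ℂ) * Kᴴ
            * (hB.1.eigenvectorUnitary : Matrix (Fin n) (Fin n) ℂ)) i j)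
      = ((Xᴴ * A * X).trace).re + t * ((Yᴴ * Y * B).trace).re := by
  set U := (hA.1.eigenvectorUnitary : Matrix (Fin n) (Fin n) ℂ) with hUdef
  set V := (hB.1.eigenvectorUnitary : Matrix (Fin n) (Fin n) ℂ) with hVdef
  have hU1 : U * star U = 1 := Matrix.mem_unitaryGroup_iff.mp (hA.1.eigenvectorUnitary).2
  have hU2 : star U * U = 1 := Matrix.mem_unitaryGroup_iff'.mp (hA.1.eigenvectorUnitary).2
  have hV1 : V * star V = 1 := Matrix.mem_unitaryGroup_iff.mp (hB.1.eigenvectorUnitary).2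
  have hV2 : star V * V = 1 := Matrix.mem_unitaryGroup_iff'.mp (hB.1.eigenvectorUnitary).2
  set N := star U * Kᴴ * V with hN
  set c : Fin n → Fin n → ℝ := fun i j =>
    t * hB.1.eigenvalues j / (hA.1.eigenvalues i + t * hB.1.eigenvalues j) with hc
  set Cm : Matrix (Fin n) (Fin n) ℂ := Matrix.of (fun i j => ((c i j : ℝ) : ℂ) * N i j) with hCm
  refine ⟨U * Cm * star V, Kᴴ - U * Cm * star V, add_sub_cancel _ _, ?_⟩
  have hXt : star U * (U * Cm * star V) * V = Cm := by
    have := conj_reconstruct (star U) Cm (star V)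
      (by rwa [star_star]) (by rwa [star_star])
    rwa [star_star, star_star] at this
  have hYt : star U * (Kᴴ - U * Cm * star V) * V = N - Cm := by
    rw [Matrix.mul_sub, Matrix.sub_mul, hXt, hN]
  rw [quad_left_form A _ V hA.1 hV1 hV2, quad_right_form B _ U hB.1 hU1 hU2,
    Complex.ofReal_re, Complex.ofReal_re, ← hUdef, ← hVdef, hXt, hYt]
  rw [Finset.mul_sum, ← Finset.sum_add_distrib]
  refine Finset.sum_congr rfl fun i _ => ?_
  rw [Finset.mul_sum, ← Finset.sum_add_distrib]
  refine Finset.sum_congr rfl fun j _ => ?_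
  have h1 : Complex.normSq (Cm i j) = (c i j)^2 * Complex.normSq (N i j) := by
    rw [hCm]
    simp only [Matrix.of_apply]
    rw [Complex.normSq_mul, Complex.normSq_ofReal]
    ring
  have h2 : Complex.normSq ((N - Cm) i j) = (1 - c i j)^2 * Complex.normSq (N i j) := by
    rw [Matrix.sub_apply, hCm]
    simp only [Matrix.of_apply]
    rw [show N i j - ((c i j : ℝ) : ℂ) * N i j = (((1 - c i j : ℝ) : ℝ) : ℂ) * N i j by
      push_cast; ring]
    rw [Complex.normSq_mul, Complex.normSq_ofReal]
    ring
  rw [h1, h2]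
  have heq := hker_eq (t := t) (hA.eigenvalues_nonneg i) (hB.eigenvalues_nonneg j) ht
  simp only [hc]
  rw [← heq]
  ring

lemma sliceFun_eq (p t : ℝ) (K A B : Matrix (Fin n) (Fin n) ℂ)
    (hA : A.PosSemidef) (hB : B.PosSemidef) :
    sliceFun p t K A B hA hB = t ^ (p-2) *
      ∑ i, ∑ j, hker t (hA.1.eigenvalues i) (hB.1.eigenvalues j)
        * Complex.normSq ((star (hA.1.eigenvectorUnitary : Matrix (Fin n) (Fin n) ℂ) * Kᴴ
            * (hB.1.eigenvectorUnitary : Matrix (Fin n) (Fin n) ℂ)) i j) := by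
  unfold sliceFun
  rw [Finset.mul_sum]
  refine Finset.sum_congr rfl fun i _ => ?_
  rw [Finset.mul_sum]
  refine Finset.sum_congr rfl fun j _ => ?_
  ring

lemma sliceFun_concave {p : ℝ} (hp0 : 0 < p) (hp1 : p < 1)
    (K A₁ A₂ B₁ B₂ : Matrix (Fin n) (Fin n) ℂ)
    (hA₁ : A₁.PosSemidef) (hA₂ : A₂.PosSemidef) (hB₁ : B₁.PosSemidef) (hB₂ : B₂.PosSemidef)
    (l : ℝ) (hl0 : 0 ≤ l) (hl1 : l ≤ 1)
    (hAb : (l • A₁ + (1-l) • A₂).PosSemidef) (hBb : (l • B₁ + (1-l) • B₂).PosSemidef)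
    {t : ℝ} (ht : t ∈ Ioi (0:ℝ)) :
    l * sliceFun p t K A₁ B₁ hA₁ hB₁ + (1-l) * sliceFun p t K A₂ B₂ hA₂ hB₂
      ≤ sliceFun p t K (l • A₁ + (1-l) • A₂) (l • B₁ + (1-l) • B₂) hAb hBb := by
  have ht0 : (0:ℝ) < t := ht
  have htp : (0:ℝ) ≤ t ^ (p-2) := Real.rpow_nonneg ht0.le _
  rw [sliceFun_eq, sliceFun_eq, sliceFun_eq]
  obtain ⟨X, Y, hXY, heq⟩ := slice_attain K _ _ hAb hBb ht0
  rw [heq]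
  have linX : ((Xᴴ * (l • A₁ + (1-l) • A₂) * X).trace).re
      = l * ((Xᴴ * A₁ * X).trace).re + (1-l) * ((Xᴴ * A₂ * X).trace).re := by
    have hm : Xᴴ * (l • A₁ + (1-l) • A₂) * X
        = l • (Xᴴ * A₁ * X) + (1-l) • (Xᴴ * A₂ * X) := by
      rw [Matrix.mul_add, Matrix.add_mul, Matrix.mul_smul, Matrix.mul_smul,
        Matrix.smul_mul, Matrix.smul_mul]
    rw [hm, Matrix.trace_add, Matrix.trace_smul, Matrix.trace_smul, Complex.add_re,
      Complex.real_smul, Complex.real_smul, Complex.re_ofReal_mul, Complex.re_ofReal_mul]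
  have linY : ((Yᴴ * Y * (l • B₁ + (1-l) • B₂)).trace).re
      = l * ((Yᴴ * Y * B₁).trace).re + (1-l) * ((Yᴴ * Y * B₂).trace).re := by
    have hm : Yᴴ * Y * (l • B₁ + (1-l) • B₂)
        = l • (Yᴴ * Y * B₁) + (1-l) • (Yᴴ * Y * B₂) := by
      rw [Matrix.mul_add, Matrix.mul_smul, Matrix.mul_smul]
    rw [hm, Matrix.trace_add, Matrix.trace_smul, Matrix.trace_smul, Complex.add_re,
      Complex.real_smul, Complex.real_smul, Complex.re_ofReal_mul, Complex.re_ofReal_mul]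
  have b1 := slice_lower K A₁ B₁ X Y hA₁ hB₁ ht0 hXY
  have b2 := slice_lower K A₂ B₂ X Y hA₂ hB₂ ht0 hXY
  have hb1 := mul_le_mul_of_nonneg_left b1 hl0
  have hb2 := mul_le_mul_of_nonneg_left b2 (by linarith : (0:ℝ) ≤ 1 - l)
  have main : l * (∑ i, ∑ j, hker t (hA₁.1.eigenvalues i) (hB₁.1.eigenvalues j)
        * Complex.normSq ((star (hA₁.1.eigenvectorUnitary : Matrix (Fin n) (Fin n) ℂ) * Kᴴ
            * (hB₁.1.eigenvectorUnitary : Matrix (Fin n) (Fin n) ℂ)) i j))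
      + (1-l) * (∑ i, ∑ j, hker t (hA₂.1.eigenvalues i) (hB₂.1.eigenvalues j)
        * Complex.normSq ((star (hA₂.1.eigenvectorUnitary : Matrix (Fin n) (Fin n) ℂ) * Kᴴ
            * (hB₂.1.eigenvectorUnitary : Matrix (Fin n) (Fin n) ℂ)) i j))
      ≤ ((Xᴴ * (l • A₁ + (1-l) • A₂) * X).trace).re
        + t * ((Yᴴ * Y * (l • B₁ + (1-l) • B₂)).trace).re := by
    rw [linX, linY]
    nlinarith [hb1, hb2]
  nlinarith [mul_le_mul_of_nonneg_left main htp]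

/-- **Lieb's concavity theorem.**  For `0 < p < 1` and fixed `K`, the map
`(A, B) ↦ Tr (A^p Kᴴ B^(1-p) K)` is jointly concave on positive semidefinite matrices. -/
theorem lieb_concavity {n : ℕ} (p : ℝ) (hp0 : 0 < p) (hp1 : p < 1)
    (K A₁ A₂ B₁ B₂ : Matrix (Fin n) (Fin n) ℂ)
    (hA₁ : A₁.PosSemidef) (hA₂ : A₂.PosSemidef)
    (hB₁ : B₁.PosSemidef) (hB₂ : B₂.PosSemidef)
    (l : ℝ) (hl0 : 0 ≤ l) (hl1 : l ≤ 1) :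
    l * ((mpow A₁ p * Kᴴ * mpow B₁ (1 - p) * K).trace).re
      + (1 - l) * ((mpow A₂ p * Kᴴ * mpow B₂ (1 - p) * K).trace).re
      ≤ ((mpow (l • A₁ + (1 - l) • A₂) p * Kᴴ
          * mpow (l • B₁ + (1 - l) • B₂) (1 - p) * K).trace).re := by
  have hAb : (l • A₁ + (1 - l) • A₂).PosSemidef :=
    (posSemidef_real_smul hA₁ hl0).add (posSemidef_real_smul hA₂ (by linarith))
  have hBb : (l • B₁ + (1 - l) • B₂).PosSemidef :=
    (posSemidef_real_smul hB₁ hl0).add (posSemidef_real_smul hB₂ (by linarith))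
  have hC : 0 < liebC p := liebC_pos hp0 hp1
  rw [← mul_le_mul_iff_left₀ hC]
  have e1 := sliceFun_integral hp0 hp1 K A₁ B₁ hA₁ hB₁
  have e2 := sliceFun_integral hp0 hp1 K A₂ B₂ hA₂ hB₂
  have eb := sliceFun_integral hp0 hp1 K _ _ hAb hBb
  rw [add_mul, mul_assoc l ((mpow A₁ p * Kᴴ * mpow B₁ (1 - p) * K).trace).re (liebC p),
    mul_assoc (1-l) ((mpow A₂ p * Kᴴ * mpow B₂ (1 - p) * K).trace).re (liebC p),
    ← e1, ← e2, ← eb]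
  rw [← integral_const_mul, ← integral_const_mul]
  rw [← integral_add ((sliceFun_integrable hp0 hp1 K A₁ B₁ hA₁ hB₁).const_mul l)
    ((sliceFun_integrable hp0 hp1 K A₂ B₂ hA₂ hB₂).const_mul (1-l))]
  refine setIntegral_mono_on ?_ ?_ measurableSet_Ioi ?_
  · exact ((sliceFun_integrable hp0 hp1 K A₁ B₁ hA₁ hB₁).const_mul l).add
      ((sliceFun_integrable hp0 hp1 K A₂ B₂ hA₂ hB₂).const_mul (1-l))
  · exact sliceFun_integrable hp0 hp1 K _ _ hAb hBb
  · intro t ht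
    exact sliceFun_concave hp0 hp1 K A₁ A₂ B₁ B₂ hA₁ hA₂ hB₁ hB₂ l hl0 hl1 hAb hBb ht
end

section
/- For positive definite n×n matrices A, the two linear maps on n×n matrices Ω_A(K) = ∫₀¹ A^p K A^(1-p) dp and Ω_A⁻¹(X) = ∫₀^∞ (A+uI)⁻¹ X (A+uI)⁻¹ du are inverses of each other: Ω_A⁻¹(Ω_A(K)) = K for all K. -/
open Matrix MeasureTheory
open scoped ComplexOrder

/-- Entrywise integral of a matrix-valued function over a set `s ⊆ ℝ`. -/
noncomputable def mInt {n : ℕ} (s : Set ℝ) (f : ℝ → Matrix (Fin n) (Fin n) ℂ) :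
    Matrix (Fin n) (Fin n) ℂ :=
  Matrix.of fun i j => ∫ u in s, f u i j

/-- The non-commutative multiplication operator `Ω_A(K) = ∫₀¹ A^p K A^(1-p) dp`. -/
noncomputable def Omega {n : ℕ} (A K : Matrix (Fin n) (Fin n) ℂ) :
    Matrix (Fin n) (Fin n) ℂ :=
  mInt (Set.Ioc (0 : ℝ) 1) (fun p => mpow A p * K * mpow A (1 - p))

/-- The operator `Ω_A⁻¹(X) = ∫₀^∞ (A + uI)⁻¹ X (A + uI)⁻¹ du`. -/
noncomputable def OmegaInv {n : ℕ} (A X : Matrix (Fin n) (Fin n) ℂ) :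
    Matrix (Fin n) (Fin n) ℂ :=
  mInt (Set.Ioi (0 : ℝ)) (fun u => (A + u • 1)⁻¹ * X * (A + u • 1)⁻¹)

open Set Filter


lemma J_cont {a b : ℝ} (ha : 0 < a) (hb : 0 < b) :
    Continuous (fun p : ℝ => a ^ p * b ^ (1 - p)) := by
  have h1 : (fun p : ℝ => a ^ p * b ^ (1 - p)) =
      fun p => Real.exp (Real.log a * p) * Real.exp (Real.log b * (1 - p)) := by
    funext p
    rw [Real.rpow_def_of_pos ha, Real.rpow_def_of_pos hb]
  rw [h1]; fun_prop

lemma L_spec {a b : ℝ} (ha : 0 < a) (hb : 0 < b) :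
    IntegrableOn (fun u => (a + u)⁻¹ * (b + u)⁻¹) (Ioi (0:ℝ)) ∧
    (∫ u in Ioi (0:ℝ), (a + u)⁻¹ * (b + u)⁻¹) *
      (∫ p in Ioc (0:ℝ) 1, a ^ p * b ^ (1 - p)) = 1 := by
  have hpos : ∀ x ∈ Ioi (0:ℝ), (0:ℝ) ≤ (a + x)⁻¹ * (b + x)⁻¹ := by
    intro x hx
    have : (0:ℝ) < x := hx
    positivity
  by_cases hab : a = b
  · subst hab
    -- antiderivative -(a+u)⁻¹
    have hderiv : ∀ x ∈ Ici (0:ℝ), HasDerivAt (fun u => -(a + u)⁻¹) ((a + x)⁻¹ * (a + x)⁻¹) x := by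
      intro x hx
      have hax : a + x ≠ 0 := by have : (0:ℝ) ≤ x := hx; positivity
      have h1 : HasDerivAt (fun u : ℝ => a + u) 1 x := (hasDerivAt_id x).const_add a
      have h2 := (h1.inv hax).neg
      refine h2.congr_deriv ?_
      field_simp
    have hlim : Tendsto (fun u : ℝ => -(a + u)⁻¹) atTop (nhds 0) := by
      have : Tendsto (fun u : ℝ => a + u) atTop atTop :=
        tendsto_atTop_add_const_left _ a tendsto_id
      simpa using this.inv_tendsto_atTop.neg
    refine ⟨integrableOn_Ioi_deriv_of_nonneg' hderiv hpos hlim, ?_⟩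
    have hL := integral_Ioi_of_hasDerivAt_of_nonneg' hderiv hpos hlim
    have hJ : (∫ p in Ioc (0:ℝ) 1, a ^ p * a ^ (1 - p)) = a := by
      have : ∀ p : ℝ, a ^ p * a ^ (1 - p) = a := by
        intro p
        rw [← Real.rpow_add ha]
        norm_num
      simp only [this]
      simp
    rw [hL, hJ]
    simp
    field_simp
  · -- a ≠ b
    have hla : Real.log a - Real.log b ≠ 0 := by
      refine sub_ne_zero.2 fun h => hab ?_
      exact Real.log_injOn_pos (mem_Ioi.2 ha) (mem_Ioi.2 hb) h
    have hab' : a - b ≠ 0 := sub_ne_zero.2 hab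
    set g : ℝ → ℝ := fun u => (Real.log (b + u) - Real.log (a + u)) / (a - b) with hg
    have hderiv : ∀ x ∈ Ici (0:ℝ), HasDerivAt g ((a + x)⁻¹ * (b + x)⁻¹) x := by
      intro x hx
      have hx0 : (0:ℝ) ≤ x := hx
      have hax : a + x ≠ 0 := by positivity
      have hbx : b + x ≠ 0 := by positivity
      have h1 : HasDerivAt (fun u : ℝ => a + u) 1 x := (hasDerivAt_id x).const_add a
      have h2 : HasDerivAt (fun u : ℝ => b + u) 1 x := (hasDerivAt_id x).const_add b
      have h3 := ((h2.log hbx).sub (h1.log hax)).div_const (a - b)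
      refine h3.congr_deriv ?_
      field_simp
      ring
    have hlim : Tendsto g atTop (nhds 0) := by
      have h1 : Tendsto (fun u : ℝ => a + u) atTop atTop :=
        tendsto_atTop_add_const_left _ a tendsto_id
      have h2 : Tendsto (fun u : ℝ => (b - a) / (a + u)) atTop (nhds 0) :=
        tendsto_const_nhds.div_atTop h1
      have h3 : Tendsto (fun u : ℝ => 1 + (b - a) / (a + u)) atTop (nhds 1) := by
        simpa using h2.const_add 1
      have h4 : Tendsto (fun u : ℝ => Real.log (1 + (b - a) / (a + u))) atTop (nhds 0) := by
        have := (Real.continuousAt_log one_ne_zero).tendsto.comp h3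
        simpa [Function.comp_def] using this
      have h5 : (fun u : ℝ => Real.log (b + u) - Real.log (a + u)) =ᶠ[atTop]
          fun u => Real.log (1 + (b - a) / (a + u)) := by
        filter_upwards [eventually_gt_atTop 0] with u hu
        have hax : a + u ≠ 0 := by positivity
        have hbx : (0:ℝ) < b + u := by positivity
        rw [← Real.log_div hbx.ne' hax]
        congr 1
        field_simp
        ring
      have h6 : Tendsto (fun u : ℝ => Real.log (b + u) - Real.log (a + u)) atTop (nhds 0) :=
        h4.congr' h5.symm
      simpa [hg] using h6.div_const (a - b)
    refine ⟨integrableOn_Ioi_deriv_of_nonneg' hderiv hpos hlim, ?_⟩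
    have hL := integral_Ioi_of_hasDerivAt_of_nonneg' hderiv hpos hlim
    have hJ : (∫ p in Ioc (0:ℝ) 1, a ^ p * b ^ (1 - p))
        = (a - b) / (Real.log a - Real.log b) := by
      have h1 : ∀ p : ℝ, a ^ p * b ^ (1 - p)
          = b * Real.exp ((Real.log a - Real.log b) * p) := by
        intro p
        rw [Real.rpow_def_of_pos ha, Real.rpow_def_of_pos hb, ← Real.exp_add]
        nth_rewrite 2 [← Real.exp_log hb]
        rw [← Real.exp_add]
        congr 1
        ring
      rw [← intervalIntegral.integral_of_le zero_le_one]
      simp only [h1]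
      rw [intervalIntegral.integral_const_mul,
        intervalIntegral.integral_comp_mul_left Real.exp hla, mul_zero, mul_one,
        integral_exp]
      rw [smul_eq_mul, Real.exp_zero, Real.exp_sub, Real.exp_log ha, Real.exp_log hb]
      field_simp
    rw [hL, hJ, hg]
    simp only [add_zero, zero_sub]
    field_simp
    ring

lemma mInt_congr {n : ℕ} {s : Set ℝ} (hs : MeasurableSet s)
    {f g : ℝ → Matrix (Fin n) (Fin n) ℂ} (h : ∀ u ∈ s, f u = g u) :
    mInt s f = mInt s g := by
  ext i j
  simp only [mInt, Matrix.of_apply]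
  exact setIntegral_congr_fun hs fun u hu => by rw [h u hu]

lemma mInt_conj {n : ℕ} (s : Set ℝ) (f : ℝ → Matrix (Fin n) (Fin n) ℂ)
    (U V : Matrix (Fin n) (Fin n) ℂ)
    (hf : ∀ i j, IntegrableOn (fun u => f u i j) s) :
    mInt s (fun u => U * f u * V) = U * mInt s f * V := by
  ext i j
  simp only [mInt, Matrix.of_apply, Matrix.mul_apply]
  have h1 : ∀ u : ℝ, (∑ l, (∑ k, U i k * f u k l) * V l j)
      = ∑ l, ∑ k, U i k * f u k l * V l j := by
    intro u; simp [Finset.sum_mul]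
  simp only [h1]
  have h2 : ∫ u in s, ∑ l, ∑ k, U i k * f u k l * V l j
      = ∑ l, ∑ k, ∫ u in s, U i k * f u k l * V l j := by
    have hInt : ∀ l : Fin n, Integrable (fun u => ∑ k, U i k * f u k l * V l j)
        (volume.restrict s) :=
      fun l => integrable_finset_sum Finset.univ
        fun k _ => (((hf k l).const_mul _).mul_const _)
    rw [integral_finset_sum Finset.univ (fun l _ => hInt l)]
    exact Finset.sum_congr rfl fun l _ =>
      integral_finset_sum Finset.univ (fun k _ => (((hf k l).const_mul _).mul_const _))
  rw [h2]
  simp only [integral_mul_const, integral_const_mul, Finset.sum_mul]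

lemma mInt_dsandwich {n : ℕ} (s : Set ℝ) (c e : ℝ → Fin n → ℝ)
    (M : Matrix (Fin n) (Fin n) ℂ)
    (hint : ∀ i j, IntegrableOn (fun u => c u i * e u j) s) :
    mInt s (fun u => diagonal (fun i => ((c u i : ℝ) : ℂ)) * M *
        diagonal (fun i => ((e u i : ℝ) : ℂ)))
      = Matrix.of fun i j => ((∫ u in s, c u i * e u j : ℝ) : ℂ) * M i j := by
  ext i j
  simp only [mInt, Matrix.of_apply, Matrix.diagonal_mul, Matrix.mul_diagonal]
  have h1 : (fun u => ((c u i : ℝ) : ℂ) * M i j * ((e u j : ℝ) : ℂ))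
      = fun u => M i j * ((c u i * e u j : ℝ) : ℂ) := by
    funext u; push_cast; ring
  rw [h1, integral_const_mul, mul_comm]
  congr 1
  exact integral_ofReal

lemma entry_int_ofReal {n : ℕ} {s : Set ℝ} (c e : ℝ → Fin n → ℝ)
    (M : Matrix (Fin n) (Fin n) ℂ)
    (hint : ∀ i j, IntegrableOn (fun u => c u i * e u j) s) (i j : Fin n) :
    IntegrableOn (fun u => (diagonal (fun i => ((c u i : ℝ) : ℂ)) * M *
        diagonal (fun i => ((e u i : ℝ) : ℂ))) i j) s := by
  simp only [Matrix.diagonal_mul, Matrix.mul_diagonal]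
  have h1 : (fun u => ((c u i : ℝ) : ℂ) * M i j * ((e u j : ℝ) : ℂ))
      = fun u => M i j * ((c u i * e u j : ℝ) : ℂ) := by
    funext u; push_cast; ring
  rw [h1]
  exact ((hint i j).ofReal).const_mul _

lemma mpow_eq {n : ℕ} {A : Matrix (Fin n) (Fin n) ℂ} (hA : A.IsHermitian) (p : ℝ) :
    mpow A p = (hA.eigenvectorUnitary : Matrix (Fin n) (Fin n) ℂ) *
        diagonal (fun i => ((hA.eigenvalues i ^ p : ℝ) : ℂ)) *
        star (hA.eigenvectorUnitary : Matrix (Fin n) (Fin n) ℂ) := by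
  rw [mpow, dif_pos hA]
  rfl

lemma resolvent_eq {n : ℕ} {A : Matrix (Fin n) (Fin n) ℂ} (hA : A.PosDef)
    {u : ℝ} (hu : 0 < u) :
    (A + u • 1)⁻¹ = (hA.1.eigenvectorUnitary : Matrix (Fin n) (Fin n) ℂ) *
        diagonal (fun i => (((hA.1.eigenvalues i + u)⁻¹ : ℝ) : ℂ)) *
        star (hA.1.eigenvectorUnitary : Matrix (Fin n) (Fin n) ℂ) := by
  set U := (hA.1.eigenvectorUnitary : Matrix (Fin n) (Fin n) ℂ)
  have hU : U * star U = 1 := Matrix.mem_unitaryGroup_iff.mp (hA.1.eigenvectorUnitary).2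
  have hU' : star U * U = 1 := Matrix.mem_unitaryGroup_iff'.mp (hA.1.eigenvectorUnitary).2
  have hne : ∀ i, (hA.1.eigenvalues i + u) ≠ 0 := by
    intro i
    have := hA.eigenvalues_pos i
    positivity
  have hAeq : A + u • 1 = U * diagonal (fun i => ((hA.1.eigenvalues i + u : ℝ) : ℂ)) * star U := by
    nth_rewrite 1 [hA.1.spectral_theorem]
    rw [Unitary.conjStarAlgAut_apply]
    have h1 : (u : ℝ) • (1 : Matrix (Fin n) (Fin n) ℂ) = U * ((u:ℝ) • 1) * star U := by
      rw [Matrix.mul_smul, Matrix.smul_mul, mul_one, hU]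
    rw [h1, ← Matrix.add_mul, ← Matrix.mul_add]
    congr 1
    congr 1
    rw [← Matrix.diagonal_one, ← Matrix.diagonal_smul, Matrix.diagonal_add]
    congr 1
    funext i
    simp [Function.comp, Complex.real_smul]
  rw [hAeq]
  apply Matrix.inv_eq_right_inv
  rw [Matrix.mul_assoc, Matrix.mul_assoc]
  rw [← Matrix.mul_assoc (star U) (U * _), ← Matrix.mul_assoc (star U) U, hU', one_mul]
  rw [← Matrix.mul_assoc (diagonal _), Matrix.diagonal_mul_diagonal]
  have : (fun i => ((hA.1.eigenvalues i + u : ℝ) : ℂ) * (((hA.1.eigenvalues i + u)⁻¹ : ℝ) : ℂ))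
      = fun _ => (1 : ℂ) := by
    funext i
    rw [← Complex.ofReal_mul, mul_inv_cancel₀ (hne i), Complex.ofReal_one]
  rw [this, Matrix.diagonal_one, one_mul]
  exact hU




/-- For positive definite `A`, the maps `Ω_A` and `Ω_A⁻¹` are inverses of each other. -/
theorem OmegaInv_Omega {n : ℕ} (A : Matrix (Fin n) (Fin n) ℂ) (hA : A.PosDef)
    (K : Matrix (Fin n) (Fin n) ℂ) :
    OmegaInv A (Omega A K) = K := by
  set U : Matrix (Fin n) (Fin n) ℂ := (hA.1.eigenvectorUnitary : Matrix (Fin n) (Fin n) ℂ)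
    with hUdef
  set d : Fin n → ℝ := hA.1.eigenvalues with hddef
  have hd : ∀ i, 0 < d i := fun i => hA.eigenvalues_pos i
  have hU : U * star U = 1 := Matrix.mem_unitaryGroup_iff.mp (hA.1.eigenvectorUnitary).2
  have hU' : star U * U = 1 := Matrix.mem_unitaryGroup_iff'.mp (hA.1.eigenvectorUnitary).2
  have cancel : ∀ X : Matrix (Fin n) (Fin n) ℂ, star U * (U * X) = X := by
    intro X; rw [← Matrix.mul_assoc, hU', one_mul]
  set M : Matrix (Fin n) (Fin n) ℂ := star U * K * U with hM
  have hintJ : ∀ i j : Fin n,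
      IntegrableOn (fun p => d i ^ p * d j ^ (1 - p)) (Set.Ioc (0:ℝ) 1) :=
    fun i j => (J_cont (hd i) (hd j)).integrableOn_Ioc
  have hintL : ∀ i j : Fin n,
      IntegrableOn (fun u => (d i + u)⁻¹ * (d j + u)⁻¹) (Set.Ioi (0:ℝ)) :=
    fun i j => (L_spec (hd i) (hd j)).1
  set N : Matrix (Fin n) (Fin n) ℂ := Matrix.of fun i j =>
    ((∫ p in Set.Ioc (0:ℝ) 1, d i ^ p * d j ^ (1 - p) : ℝ) : ℂ) * M i j with hN
  have e1 : ∀ p : ℝ, mpow A p * K * mpow A (1 - p)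
      = U * (diagonal (fun i => ((d i ^ p : ℝ) : ℂ)) * M *
          diagonal (fun i => ((d i ^ (1 - p) : ℝ) : ℂ))) * star U := by
    intro p
    rw [mpow_eq hA.1, mpow_eq hA.1, hM]
    simp only [Matrix.mul_assoc, cancel]
    rfl
  have stepA : Omega A K = U * N * star U := by
    rw [Omega, funext e1,
      mInt_conj _ _ _ _ (entry_int_ofReal (fun p i => d i ^ p) (fun p i => d i ^ (1 - p)) M hintJ),
      mInt_dsandwich _ _ _ _ hintJ]
  have e2 : ∀ u ∈ Set.Ioi (0:ℝ), (A + u • 1)⁻¹ * (U * N * star U) * (A + u • 1)⁻¹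
      = U * (diagonal (fun i => (((d i + u)⁻¹ : ℝ) : ℂ)) * N *
          diagonal (fun i => (((d i + u)⁻¹ : ℝ) : ℂ))) * star U := by
    intro u hu
    rw [resolvent_eq hA (mem_Ioi.mp hu), ← hUdef]
    simp only [Matrix.mul_assoc, cancel]
    rfl
  have stepB : OmegaInv A (U * N * star U) = U * M * star U := by
    rw [OmegaInv, mInt_congr measurableSet_Ioi e2,
      mInt_conj _ _ _ _ (entry_int_ofReal (fun u i => (d i + u)⁻¹) (fun u i => (d i + u)⁻¹)
        N hintL),
      mInt_dsandwich _ _ _ _ hintL]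
    congr 1
    congr 1
    ext i j
    simp only [Matrix.of_apply, hN]
    rw [← mul_assoc, ← Complex.ofReal_mul, (L_spec (hd i) (hd j)).2, Complex.ofReal_one,
      one_mul]
  rw [stepA, stepB, hM]
  calc U * (star U * K * U) * star U = (U * star U) * K * (U * star U) := by
        simp only [Matrix.mul_assoc]
    _ = K := by rw [hU, one_mul, mul_one]
end

section
/- For positive definite n×n matrices P and Q, log P − log Q = ∫₀^∞ [(Q+uI)⁻¹ − (P+uI)⁻¹] du = ∫₀^∞ (Q+uI)⁻¹ (P−Q) (P+uI)⁻¹ du. -/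
open Matrix MeasureTheory
open scoped ComplexOrder

/-- Matrix logarithm via functional calculus (junk value `0` off the Hermitian matrices). -/
noncomputable def mlog {n : ℕ} (A : Matrix (Fin n) (Fin n) ℂ) :
    Matrix (Fin n) (Fin n) ℂ :=
  if h : A.IsHermitian then h.cfc Real.log else 0

section Aux
open Set Filter Topology



section Scalar
open MeasureTheory Set Filter Topology

lemma aux_hasDerivAt {l : ℝ} (hl : 0 < l) {u : ℝ} (hu : u ∈ Ici (0:ℝ)) :
    HasDerivAt (fun u : ℝ => Real.log (1 + u) - Real.log (l + u))
      ((1 + u)⁻¹ - (l + u)⁻¹) u := by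
  have hu' : (0:ℝ) ≤ u := hu
  have h1 : HasDerivAt (fun u : ℝ => Real.log (1 + u)) ((1+u)⁻¹) u := by
    have := (Real.hasDerivAt_log (by positivity : (1:ℝ)+u ≠ 0)).comp u
      ((hasDerivAt_id u).const_add 1)
    simpa [Function.comp_def] using this
  have h2 : HasDerivAt (fun u : ℝ => Real.log (l + u)) ((l+u)⁻¹) u := by
    have := (Real.hasDerivAt_log (by positivity : l+u ≠ 0)).comp u
      ((hasDerivAt_id u).const_add l)
    simpa [Function.comp_def] using this
  exact h1.sub h2

lemma aux_tendsto {l : ℝ} (hl : 0 < l) :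
    Tendsto (fun u : ℝ => Real.log (1 + u) - Real.log (l + u)) atTop (𝓝 0) := by
  have h1 : Tendsto (fun u : ℝ => (1 + u) / (l + u)) atTop (𝓝 1) := by
    have h2 : Tendsto (fun u : ℝ => (1 - l) / (l + u)) atTop (𝓝 0) :=
      tendsto_const_nhds.div_atTop (tendsto_atTop_add_const_left _ l tendsto_id)
    have h3 : Tendsto (fun u : ℝ => 1 + (1 - l) / (l + u)) atTop (𝓝 (1 + 0)) :=
      (tendsto_const_nhds (x := (1:ℝ))).add h2
    rw [add_zero] at h3
    apply h3.congr'
    filter_upwards [eventually_gt_atTop 0] with u hu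
    have : l + u ≠ 0 := by positivity
    field_simp
    ring
  have h3 := (Real.continuousAt_log one_ne_zero).tendsto.comp h1
  rw [Real.log_one] at h3
  apply h3.congr'
  filter_upwards [eventually_gt_atTop 0] with u hu
  rw [Function.comp_apply, Real.log_div (by positivity) (by positivity)]

lemma scalar_integrable {l : ℝ} (hl : 0 < l) :
    IntegrableOn (fun u : ℝ => (1 + u)⁻¹ - (l + u)⁻¹) (Ioi (0:ℝ)) := by
  rcases le_total 1 l with h | h
  · exact integrableOn_Ioi_deriv_of_nonneg' (fun x hx => aux_hasDerivAt hl hx)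
      (fun x hx => by
        have hx' : (0:ℝ) < x := hx
        have : (0:ℝ) < 1 + x := by linarith
        have h2 : (1:ℝ) + x ≤ l + x := by linarith
        simp only [sub_nonneg]
        exact inv_anti₀ this h2) (aux_tendsto hl)
  · exact integrableOn_Ioi_deriv_of_nonpos' (fun x hx => aux_hasDerivAt hl hx)
      (fun x hx => by
        have hx' : (0:ℝ) < x := hx
        have : (0:ℝ) < l + x := by linarith
        have h2 : l + x ≤ 1 + x := by linarith
        simp only [sub_nonpos]
        exact inv_anti₀ this h2) (aux_tendsto hl)

lemma scalar_integral {l : ℝ} (hl : 0 < l) :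
    ∫ u in Ioi (0:ℝ), ((1 + u)⁻¹ - (l + u)⁻¹) = Real.log l := by
  have := integral_Ioi_of_hasDerivAt_of_tendsto' (f' := fun u : ℝ => (1+u)⁻¹ - (l+u)⁻¹)
    (fun x hx => aux_hasDerivAt hl hx) (scalar_integrable hl) (aux_tendsto hl)
  simpa using this

end Scalar

section MatrixLemmas
variable {n : ℕ}

lemma triple_entry (U : Matrix (Fin n) (Fin n) ℂ) (d : Fin n → ℂ) (i j : Fin n) :
    (U * Matrix.diagonal d * star U) i j = ∑ k, U i k * d k * star (U j k) := by
  rw [Matrix.mul_apply]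
  refine Finset.sum_congr rfl fun k _ => ?_
  rw [Matrix.mul_diagonal, Matrix.star_apply]

lemma delta_sum {U : Matrix (Fin n) (Fin n) ℂ} (hU : U * star U = 1) (i j : Fin n) :
    ∑ k, U i k * star (U j k) = if i = j then 1 else 0 := by
  have := congrFun (congrFun hU i) j
  simpa [Matrix.mul_apply, Matrix.star_apply, Matrix.one_apply] using this

lemma spec_decomp {A : Matrix (Fin n) (Fin n) ℂ} (hA : A.IsHermitian) (u : ℝ) :
    A + u • 1 = (hA.eigenvectorUnitary : Matrix (Fin n) (Fin n) ℂ)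
      * Matrix.diagonal (fun k => ((hA.eigenvalues k + u : ℝ) : ℂ))
      * star (hA.eigenvectorUnitary : Matrix (Fin n) (Fin n) ℂ) := by
  set U := (hA.eigenvectorUnitary : Matrix (Fin n) (Fin n) ℂ)
  have hU : U * star U = 1 := (Matrix.mem_unitaryGroup_iff).mp hA.eigenvectorUnitary.2
  have h1 : Matrix.diagonal (fun k => ((hA.eigenvalues k + u : ℝ) : ℂ))
      = Matrix.diagonal (RCLike.ofReal ∘ hA.eigenvalues) + u • 1 := by
    ext i j
    by_cases h : i = j <;>
      simp [h, Matrix.diagonal, Matrix.one_apply, Complex.ofReal_add, RCLike.ofReal]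
  rw [h1, Matrix.mul_add, Matrix.add_mul]
  congr 1
  · exact hA.spectral_theorem
  · rw [Matrix.mul_smul, Matrix.smul_mul, mul_one, hU]

lemma spec_right_inv {A : Matrix (Fin n) (Fin n) ℂ} (hA : A.IsHermitian) {u : ℝ}
    (hpos : ∀ k, 0 < hA.eigenvalues k + u) :
    (A + u • 1) * ((hA.eigenvectorUnitary : Matrix (Fin n) (Fin n) ℂ)
      * Matrix.diagonal (fun k => ((hA.eigenvalues k + u : ℝ) : ℂ)⁻¹)
      * star (hA.eigenvectorUnitary : Matrix (Fin n) (Fin n) ℂ)) = 1 := by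
  set U := (hA.eigenvectorUnitary : Matrix (Fin n) (Fin n) ℂ)
  have hU : U * star U = 1 := (Matrix.mem_unitaryGroup_iff).mp hA.eigenvectorUnitary.2
  have hU' : star U * U = 1 := (Matrix.mem_unitaryGroup_iff').mp hA.eigenvectorUnitary.2
  rw [spec_decomp hA u]
  have hdd : Matrix.diagonal (fun k => ((hA.eigenvalues k + u : ℝ) : ℂ))
      * Matrix.diagonal (fun k => ((hA.eigenvalues k + u : ℝ) : ℂ)⁻¹) = 1 := by
    rw [Matrix.diagonal_mul_diagonal]
    have : (fun k => ((hA.eigenvalues k + u : ℝ) : ℂ) * ((hA.eigenvalues k + u : ℝ) : ℂ)⁻¹)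
        = fun _ => (1:ℂ) := by
      funext k
      exact mul_inv_cancel₀ (by exact_mod_cast (hpos k).ne')
    rw [this, Matrix.diagonal_one]
  calc U * Matrix.diagonal (fun k => ((hA.eigenvalues k + u : ℝ) : ℂ)) * star U
        * (U * Matrix.diagonal (fun k => ((hA.eigenvalues k + u : ℝ) : ℂ)⁻¹) * star U)
      = U * Matrix.diagonal (fun k => ((hA.eigenvalues k + u : ℝ) : ℂ)) * (star U * U)
        * Matrix.diagonal (fun k => ((hA.eigenvalues k + u : ℝ) : ℂ)⁻¹) * star U := by
        simp only [Matrix.mul_assoc]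
    _ = 1 := by
        rw [hU', Matrix.mul_one, Matrix.mul_assoc U, hdd, Matrix.mul_one, hU]

lemma spec_inv {A : Matrix (Fin n) (Fin n) ℂ} (hA : A.IsHermitian) {u : ℝ}
    (hpos : ∀ k, 0 < hA.eigenvalues k + u) :
    (A + u • 1)⁻¹ = (hA.eigenvectorUnitary : Matrix (Fin n) (Fin n) ℂ)
      * Matrix.diagonal (fun k => ((hA.eigenvalues k + u : ℝ) : ℂ)⁻¹)
      * star (hA.eigenvectorUnitary : Matrix (Fin n) (Fin n) ℂ) :=
  Matrix.inv_eq_right_inv (spec_right_inv hA hpos)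

lemma inv_entry {A : Matrix (Fin n) (Fin n) ℂ} (hA : A.IsHermitian) {u : ℝ}
    (hpos : ∀ k, 0 < hA.eigenvalues k + u) (i j : Fin n) :
    (A + u • 1)⁻¹ i j = ∑ k, (hA.eigenvectorUnitary : Matrix (Fin n) (Fin n) ℂ) i k
      * (((hA.eigenvalues k + u)⁻¹ : ℝ) : ℂ)
      * star ((hA.eigenvectorUnitary : Matrix (Fin n) (Fin n) ℂ) j k) := by
  rw [spec_inv hA hpos, triple_entry]
  refine Finset.sum_congr rfl fun k _ => ?_
  rw [Complex.ofReal_inv]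

end MatrixLemmas

end Aux

section Key
open Matrix MeasureTheory Set Filter Topology
variable {n : ℕ}

lemma mlog_entry {A : Matrix (Fin n) (Fin n) ℂ} (hA : A.IsHermitian) (i j : Fin n) :
    mlog A i j = ∑ k, (hA.eigenvectorUnitary : Matrix (Fin n) (Fin n) ℂ) i k
      * ((Real.log (hA.eigenvalues k) : ℝ) : ℂ)
      * star ((hA.eigenvectorUnitary : Matrix (Fin n) (Fin n) ℂ) j k) := by
  rw [mlog, dif_pos hA, Matrix.IsHermitian.cfc]
  exact triple_entry _ _ i j

lemma key {P : Matrix (Fin n) (Fin n) ℂ} (hP : P.PosDef) (i j : Fin n) :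
    IntegrableOn (fun u : ℝ =>
      (if i = j then (((1+u)⁻¹ : ℝ) : ℂ) else 0) - (P + u • 1)⁻¹ i j) (Ioi (0:ℝ)) ∧
    ∫ u in Ioi (0:ℝ),
      ((if i = j then (((1+u)⁻¹ : ℝ) : ℂ) else 0) - (P + u • 1)⁻¹ i j) = mlog P i j := by
  have hA := hP.1
  set U := (hA.eigenvectorUnitary : Matrix (Fin n) (Fin n) ℂ) with hUdef
  have hU : U * star U = 1 := (Matrix.mem_unitaryGroup_iff).mp hA.eigenvectorUnitary.2
  set g : ℝ → ℂ := fun u =>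
    ∑ k, U i k * ((((1+u)⁻¹ - (hA.eigenvalues k + u)⁻¹ : ℝ)):ℂ) * star (U j k) with hg
  have heq : ∀ u ∈ Ioi (0:ℝ),
      (if i = j then (((1+u)⁻¹:ℝ):ℂ) else 0) - (P + u • 1)⁻¹ i j = g u := by
    intro u hu
    have hupos : (0:ℝ) < u := hu
    have hpos : ∀ k, 0 < hA.eigenvalues k + u := fun k => add_pos (hP.eigenvalues_pos k) hupos
    rw [inv_entry hA hpos i j, hg]
    simp only [Complex.ofReal_sub, mul_sub, sub_mul, Finset.sum_sub_distrib]
    congr 1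
    have h1 : ∑ k, U i k * (((1+u)⁻¹:ℝ):ℂ) * star (U j k)
        = (((1+u)⁻¹:ℝ):ℂ) * ∑ k, U i k * star (U j k) := by
      rw [Finset.mul_sum]; exact Finset.sum_congr rfl fun k _ => by ring
    rw [h1, delta_sum hU i j]
    by_cases h : i = j <;> simp [h]
  have hint : ∀ k : Fin n, Integrable (fun u : ℝ =>
      U i k * ((((1+u)⁻¹ - (hA.eigenvalues k + u)⁻¹ : ℝ)):ℂ) * star (U j k))
      (volume.restrict (Ioi 0)) := fun k =>
    (((scalar_integrable (hP.eigenvalues_pos k)).ofReal).const_mul (U i k)).mul_const _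
  have hgint : IntegrableOn g (Ioi (0:ℝ)) := by
    rw [hg]; exact integrable_finset_sum _ (fun k _ => hint k)
  refine ⟨hgint.congr_fun (fun u hu => (heq u hu).symm) measurableSet_Ioi, ?_⟩
  rw [setIntegral_congr_fun measurableSet_Ioi heq, hg,
    integral_finset_sum _ (fun k _ => hint k), mlog_entry hA i j]
  refine Finset.sum_congr rfl fun k _ => ?_
  rw [integral_mul_const, integral_const_mul]
  have hcast : ∫ a in Ioi (0:ℝ), (((1 + a)⁻¹ - (hA.eigenvalues k + a)⁻¹ : ℝ) : ℂ)
      = ((∫ a in Ioi (0:ℝ), ((1 + a)⁻¹ - (hA.eigenvalues k + a)⁻¹ : ℝ) : ℝ) : ℂ) :=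
    integral_ofReal
  rw [hcast, scalar_integral (hP.eigenvalues_pos k)]

end Key

open Set
/-- Integral representations of `log P - log Q` for positive definite `P, Q`. -/
theorem log_sub_log_integral {n : ℕ} (P Q : Matrix (Fin n) (Fin n) ℂ)
    (hP : P.PosDef) (hQ : Q.PosDef) :
    mlog P - mlog Q
      = mInt (Set.Ioi (0 : ℝ)) (fun u => (Q + u • 1)⁻¹ - (P + u • 1)⁻¹) ∧
    mlog P - mlog Q
      = mInt (Set.Ioi (0 : ℝ)) (fun u => (Q + u • 1)⁻¹ * (P - Q) * (P + u • 1)⁻¹) := by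
  have key1 : mlog P - mlog Q
      = mInt (Set.Ioi (0 : ℝ)) (fun u => (Q + u • 1)⁻¹ - (P + u • 1)⁻¹) := by
    ext i j
    have hP' := key hP i j
    have hQ' := key hQ i j
    have hfun : (fun u : ℝ => ((Q + u • 1)⁻¹ - (P + u • 1)⁻¹) i j)
        = fun u : ℝ => ((if i = j then (((1+u)⁻¹:ℝ):ℂ) else 0) - (P + u • 1)⁻¹ i j)
                 - ((if i = j then (((1+u)⁻¹:ℝ):ℂ) else 0) - (Q + u • 1)⁻¹ i j) := by
      funext u; rw [Matrix.sub_apply]; ring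
    show mlog P i j - mlog Q i j
      = ∫ u in Ioi (0:ℝ), ((Q + u • 1)⁻¹ - (P + u • 1)⁻¹) i j
    rw [hfun, integral_sub hP'.1 hQ'.1, hP'.2, hQ'.2]
  refine ⟨key1, ?_⟩
  rw [key1]
  have hpoint : ∀ u ∈ Ioi (0:ℝ),
      (Q + u • 1)⁻¹ - (P + u • 1)⁻¹ = (Q + u • 1)⁻¹ * (P - Q) * (P + u • 1)⁻¹ := by
    intro u hu
    have hupos : (0:ℝ) < u := hu
    have hposP : ∀ k, 0 < hP.1.eigenvalues k + u :=
      fun k => add_pos (hP.eigenvalues_pos k) hupos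
    have hposQ : ∀ k, 0 < hQ.1.eigenvalues k + u :=
      fun k => add_pos (hQ.eigenvalues_pos k) hupos
    have hdP : IsUnit (P + u • 1).det :=
      Matrix.isUnit_det_of_right_inverse (spec_right_inv hP.1 hposP)
    have hdQ : IsUnit (Q + u • 1).det :=
      Matrix.isUnit_det_of_right_inverse (spec_right_inv hQ.1 hposQ)
    have hPQ : P - Q = (P + u • 1) - (Q + u • 1) := by abel
    rw [hPQ, Matrix.mul_sub, Matrix.sub_mul, Matrix.nonsing_inv_mul _ hdQ,
      Matrix.mul_assoc, Matrix.mul_nonsing_inv _ hdP, Matrix.mul_one, Matrix.one_mul]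
  show mInt _ _ = mInt _ _
  unfold mInt
  congr 1
  funext i j
  exact setIntegral_congr_fun measurableSet_Ioi
    (fun u hu => congrFun (congrFun (hpoint u hu) i) j)
end

section
/- The map (X, A) ↦ X† A⁻¹ X is jointly operator convex: for A₁, A₂ positive definite, X₁, X₂ arbitrary n×n matrices, and λ ∈ [0,1], (λX₁+(1-λ)X₂)† (λA₁+(1-λ)A₂)⁻¹ (λX₁+(1-λ)X₂) ≼ λ X₁† A₁⁻¹ X₁ + (1-λ) X₂† A₂⁻¹ X₂, where ≼ is the positive semidefinite (Loewner) order. -/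
open Matrix
open scoped ComplexOrder

lemma aux_real_smul_eq {m : Type*} (c : ℝ) (M : Matrix m m ℂ) :
    c • M = (c : ℂ) • M := by
  ext i j
  simp [Matrix.smul_apply, Complex.real_smul]

lemma aux_smul_psd {m : Type*} [Fintype m] {c : ℝ} (hc : 0 ≤ c) {M : Matrix m m ℂ}
    (hM : M.PosSemidef) : (c • M).PosSemidef := by
  rw [aux_real_smul_eq]
  constructor
  · rw [Matrix.IsHermitian, conjTranspose_smul, hM.1.eq]
    simp [Complex.star_def, Complex.conj_ofReal]
  · intro x
    have hs : (x.sum fun i xi ↦ x.sum fun j xj ↦ star xi * ((c : ℂ) • M) i j * xj)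
        = (c : ℂ) * x.sum fun i xi ↦ x.sum fun j xj ↦ star xi * M i j * xj := by
      simp only [Finsupp.sum, Finset.mul_sum, Matrix.smul_apply, smul_eq_mul]
      refine Finset.sum_congr rfl fun i _ => Finset.sum_congr rfl fun j _ => ?_
      ring
    rw [hs]
    exact mul_nonneg (by exact_mod_cast hc) (hM.2 x)

lemma aux_smul_posdef {m : Type*} [Fintype m] {c : ℝ} (hc : 0 < c) {M : Matrix m m ℂ}
    (hM : M.PosDef) : (c • M).PosDef := by
  rw [aux_real_smul_eq]
  constructor
  · rw [Matrix.IsHermitian, conjTranspose_smul, hM.1.eq]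
    simp [Complex.star_def, Complex.conj_ofReal]
  · intro x hx
    have hs : (x.sum fun i xi ↦ x.sum fun j xj ↦ star xi * ((c : ℂ) • M) i j * xj)
        = (c : ℂ) * x.sum fun i xi ↦ x.sum fun j xj ↦ star xi * M i j * xj := by
      simp only [Finsupp.sum, Finset.mul_sum, Matrix.smul_apply, smul_eq_mul]
      refine Finset.sum_congr rfl fun i _ => Finset.sum_congr rfl fun j _ => ?_
      ring
    rw [hs]
    exact mul_pos (by exact_mod_cast hc) (hM.2 hx)

/-- The block matrix `[A X; Xᴴ XᴴA⁻¹X]` is positive semidefinite for `A` positive definite. -/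
lemma aux_block_psd {n : ℕ} (A X : Matrix (Fin n) (Fin n) ℂ) (hA : A.PosDef) :
    (fromBlocks A X Xᴴ (Xᴴ * A⁻¹ * X)).PosSemidef := by
  haveI := hA.isUnit.invertible
  rw [Matrix.PosDef.fromBlocks₁₁ X (Xᴴ * A⁻¹ * X) hA, sub_self]
  exact Matrix.PosSemidef.zero

/-- **Lieb–Ruskai joint operator convexity of `(X, A) ↦ Xᴴ A⁻¹ X`**:
for positive definite `A₁, A₂`, arbitrary `X₁, X₂` and `l ∈ [0,1]`,
`(lX₁+(1-l)X₂)ᴴ (lA₁+(1-l)A₂)⁻¹ (lX₁+(1-l)X₂) ≼ l X₁ᴴ A₁⁻¹ X₁ + (1-l) X₂ᴴ A₂⁻¹ X₂`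
in the Loewner order (the difference is positive semidefinite). -/
theorem quadratic_form_jointly_operator_convex {n : ℕ}
    (A₁ A₂ X₁ X₂ : Matrix (Fin n) (Fin n) ℂ)
    (hA₁ : A₁.PosDef) (hA₂ : A₂.PosDef)
    (l : ℝ) (hl0 : 0 ≤ l) (hl1 : l ≤ 1) :
    (l • (X₁ᴴ * A₁⁻¹ * X₁) + (1 - l) • (X₂ᴴ * A₂⁻¹ * X₂)
      - (l • X₁ + (1 - l) • X₂)ᴴ * (l • A₁ + (1 - l) • A₂)⁻¹
          * (l • X₁ + (1 - l) • X₂)).PosSemidef := by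
  set A : Matrix (Fin n) (Fin n) ℂ := l • A₁ + (1 - l) • A₂ with hAdef
  have hA : A.PosDef := by
    rcases eq_or_lt_of_le hl0 with h0 | h0
    · have : A = A₂ := by simp [hAdef, ← h0]
      rw [this]; exact hA₂
    · exact (aux_smul_posdef h0 hA₁).add_posSemidef
        (aux_smul_psd (by linarith) hA₂.posSemidef)
  haveI := hA.isUnit.invertible
  set X : Matrix (Fin n) (Fin n) ℂ := l • X₁ + (1 - l) • X₂ with hXdef
  set D : Matrix (Fin n) (Fin n) ℂ :=
    l • (X₁ᴴ * A₁⁻¹ * X₁) + (1 - l) • (X₂ᴴ * A₂⁻¹ * X₂) with hDdef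
  have hblock : (fromBlocks A X Xᴴ D).PosSemidef := by
    have h₁ := aux_smul_psd hl0 (aux_block_psd A₁ X₁ hA₁)
    have h₂ := aux_smul_psd (by linarith : (0:ℝ) ≤ 1 - l) (aux_block_psd A₂ X₂ hA₂)
    have hsum := h₁.add h₂
    have heq : l • fromBlocks A₁ X₁ X₁ᴴ (X₁ᴴ * A₁⁻¹ * X₁)
        + (1 - l) • fromBlocks A₂ X₂ X₂ᴴ (X₂ᴴ * A₂⁻¹ * X₂)
        = fromBlocks A X Xᴴ D := by
      rw [Matrix.fromBlocks_smul, Matrix.fromBlocks_smul, Matrix.fromBlocks_add]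
      simp [hXdef, hAdef, hDdef, conjTranspose_smul, Complex.conj_ofReal]
    rwa [heq] at hsum
  have hsub : Xᴴ = Xᴴ := rfl
  rw [show (l • X₁ + (1 - l) • X₂)ᴴ * (l • A₁ + (1 - l) • A₂)⁻¹
          * (l • X₁ + (1 - l) • X₂) = Xᴴ * A⁻¹ * X from rfl]
  exact (Matrix.PosDef.fromBlocks₁₁ X D hA).mp hblock
end
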